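/- Let α ≥ 0 and β ∈ R satisfy 2α − 4 < β < 2α − 1 and set θ = (α+β+1)/2 ≠ 0. Then there exists a constant C > 0 depending only on α and β such that for every positive C^2 function ρ on the one-dimensional torus, ∫_T |∂_xx(ρ^θ)|^2 dx + ∫_T |∂_x(ρ^{θ/2})|^4 dx ≤ C·D_{α,β}[ρ], where D_{α,β}[ρ] = ∫_T ( (4/(α+β+1)^2)|∂_xx ρ^{(α+β+1)/2}|^2 + c(α,β)|∂_x ρ^{(α+β+1)/4}|^4 ) dx with c(α,β) = (64/(α+β+1)^2)[ (α−β−1)(1−α)/(α+β+1)^2 − β/(3(α+β+1)) ]. -/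

import Mathlib

open MeasureTheory

private lemma contDiff_deriv_aux {v : ℝ → ℝ} (hv : ContDiff ℝ 2 v) :
    Differentiable ℝ v ∧ Differentiable ℝ (deriv v) ∧ Continuous (deriv (deriv v)) := by
  rw [show (2 : WithTop ℕ∞) = 1 + 1 by norm_num, contDiff_succ_iff_deriv] at hv
  obtain ⟨hd, -, hv1⟩ := hv
  rw [contDiff_one_iff_deriv] at hv1
  exact ⟨hd, hv1.1, hv1.2⟩

private lemma deriv_periodic_eq {v : ℝ → ℝ} (hper : Function.Periodic v 1) :
    deriv v 1 = deriv v 0 := by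
  have h : v = fun y => v (y + 1) := funext fun y => (hper y).symm
  calc deriv v 1 = deriv v (0 + 1) := by norm_num
    _ = deriv (fun y => v (y + 1)) 0 := (deriv_comp_add_const ..).symm
    _ = deriv v 0 := by rw [← h]

/-- The Bernis-type inequality `∫ (v')⁴ ≤ (9/4) ∫ ((v')² + v v'')²` for periodic `C²`
functions, proved by integration by parts and the nonnegativity of `∫ ((v')² + 3 v v'')²`. -/
private lemma bernis {v : ℝ → ℝ} (hv : ContDiff ℝ 2 v) (hper : Function.Periodic v 1) :
    (∫ x in (0:ℝ)..1, (deriv v x) ^ 4)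
      ≤ (9/4) * ∫ x in (0:ℝ)..1, ((deriv v x) ^ 2 + v x * deriv (deriv v) x) ^ 2 := by
  obtain ⟨hd, hd1, hc2⟩ := contDiff_deriv_aux hv
  set dv := deriv v with hdv
  set ddv := deriv dv with hddv
  have hcv : Continuous v := hv.continuous
  have hcdv : Continuous dv := hd1.continuous
  have i1 : IntervalIntegrable (fun x => dv x ^ 4) volume 0 1 :=
    (hcdv.pow 4).intervalIntegrable 0 1
  have i2 : IntervalIntegrable (fun x => dv x ^ 2 * (v x * ddv x)) volume 0 1 :=
    ((hcdv.pow 2).mul (hcv.mul hc2)).intervalIntegrable 0 1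
  have i3 : IntervalIntegrable (fun x => (v x * ddv x) ^ 2) volume 0 1 :=
    ((hcv.mul hc2).pow 2).intervalIntegrable 0 1
  -- integration by parts : ∫ dv^4 + 3 ∫ dv^2 * (v * ddv) = 0
  have hibp : (∫ x in (0:ℝ)..1, (dv x * dv x ^ 3 + v x * (3 * dv x ^ 2 * ddv x)))
      = v 1 * dv 1 ^ 3 - v 0 * dv 0 ^ 3 := by
    apply intervalIntegral.integral_deriv_mul_eq_sub
    · exact fun x _ => (hd x).hasDerivAt
    · intro x _
      have := ((hd1 x).hasDerivAt).pow 3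
      norm_num at this
      exact this
    · exact hcdv.intervalIntegrable 0 1
    · exact ((continuous_const.mul (hcdv.pow 2)).mul hc2).intervalIntegrable 0 1
  have hbd : v 1 * dv 1 ^ 3 - v 0 * dv 0 ^ 3 = 0 := by
    have h1 : v 1 = v 0 := by simpa using hper 0
    have h2 : dv 1 = dv 0 := deriv_periodic_eq hper
    rw [h1, h2]; ring
  have hpt : ∀ x : ℝ, dv x * dv x ^ 3 + v x * (3 * dv x ^ 2 * ddv x)
      = dv x ^ 4 + 3 * (dv x ^ 2 * (v x * ddv x)) := fun x => by ring
  rw [hbd] at hibp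
  simp_rw [hpt] at hibp
  rw [intervalIntegral.integral_add i1 (i2.const_mul 3),
    intervalIntegral.integral_const_mul] at hibp
  -- nonnegativity of ∫ (P + 3Q)^2
  have hnn : 0 ≤ ∫ x in (0:ℝ)..1, (dv x ^ 2 + 3 * (v x * ddv x)) ^ 2 :=
    intervalIntegral.integral_nonneg (by norm_num) (fun x _ => sq_nonneg _)
  have hpt2 : ∀ x : ℝ, (dv x ^ 2 + 3 * (v x * ddv x)) ^ 2
      = dv x ^ 4 + (6 * (dv x ^ 2 * (v x * ddv x)) + 9 * ((v x * ddv x) ^ 2)) :=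
    fun x => by ring
  simp_rw [hpt2] at hnn
  rw [intervalIntegral.integral_add i1 ((i2.const_mul 6).add (i3.const_mul 9)),
    intervalIntegral.integral_add (i2.const_mul 6) (i3.const_mul 9),
    intervalIntegral.integral_const_mul, intervalIntegral.integral_const_mul] at hnn
  have hpt3 : ∀ x : ℝ, (dv x ^ 2 + v x * ddv x) ^ 2
      = dv x ^ 4 + (2 * (dv x ^ 2 * (v x * ddv x)) + ((v x * ddv x) ^ 2)) :=
    fun x => by ring
  simp_rw [hpt3]
  rw [intervalIntegral.integral_add i1 ((i2.const_mul 2).add i3),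
    intervalIntegral.integral_add (i2.const_mul 2) i3,
    intervalIntegral.integral_const_mul]
  linarith

/-- Under the strict strong coercivity condition `2α−4 < β < 2α−1` with `α ≥ 0`
and `θ = (α+β+1)/2 ≠ 0`, there is a constant `C > 0` depending only on `α, β`
such that for every positive `C²` function `ρ` on the torus,
`∫ |∂ₓₓ(ρ^θ)|² + ∫ |∂ₓ(ρ^{θ/2})|⁴ ≤ C · D_{α,β}[ρ]`. -/
theorem coercivity_of_dissipation (α β : ℝ) (hα : 0 ≤ α)
    (h1 : 2 * α - 4 < β) (h2 : β < 2 * α - 1)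
    (hθ : (α + β + 1) / 2 ≠ 0) :
    ∃ C : ℝ, 0 < C ∧ ∀ ρ : ℝ → ℝ, Function.Periodic ρ 1 → (∀ x, 0 < ρ x) →
      ContDiff ℝ 2 ρ →
      (∫ x in (0:ℝ)..1, |deriv (deriv (fun y => ρ y ^ ((α + β + 1) / 2))) x| ^ 2)
        + (∫ x in (0:ℝ)..1, |deriv (fun y => ρ y ^ ((α + β + 1) / 4)) x| ^ 4)
      ≤ C * ∫ x in (0:ℝ)..1,
          ((4 / (α + β + 1) ^ 2) *
              |deriv (deriv (fun y => ρ y ^ ((α + β + 1) / 2))) x| ^ 2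
            + ((64 / (α + β + 1) ^ 2) *
                ((α - β - 1) * (1 - α) / (α + β + 1) ^ 2 - β / (3 * (α + β + 1)))) *
              |deriv (fun y => ρ y ^ ((α + β + 1) / 4)) x| ^ 4) := by
  set s := α + β + 1 with hsdef
  have hs : s ≠ 0 := by intro h; apply hθ; rw [h]; norm_num
  have hs2 : 0 < s ^ 2 := lt_of_le_of_ne (sq_nonneg s) (Ne.symm (pow_ne_zero 2 hs))
  have hs4 : 0 < s ^ 4 := by nlinarith [hs2]
  set c1 : ℝ := 4 / s ^ 2 with hc1def
  set c2 : ℝ := 64 / s ^ 2 * ((α - β - 1) * (1 - α) / s ^ 2 - β / (3 * s)) with hc2def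
  have hc1 : 0 < c1 := div_pos (by norm_num) hs2
  have hquad : 0 < s ^ 2 + 9 * ((α - β - 1) * (1 - α)) - 3 * β * s := by
    have hl : 0 < s - (3 * α - 3) := by rw [hsdef]; linarith
    have hr : 0 < 3 * α - s := by rw [hsdef]; linarith
    nlinarith [mul_pos hl hr]
  have hc12 : 0 < c1 + 9 / 16 * c2 := by
    have heq : c1 + 9 / 16 * c2
        = 4 * (s ^ 2 + 9 * ((α - β - 1) * (1 - α)) - 3 * β * s) / s ^ 4 := by
      rw [hc1def, hc2def]; field_simp; ring
    rw [heq]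
    exact div_pos (by linarith) hs4
  set κ : ℝ := min c1 (c1 + 9 / 16 * c2) with hκdef
  have hκ : 0 < κ := lt_min hc1 hc12
  refine ⟨2 / κ, by positivity, ?_⟩
  intro ρ hperρ hpos hρ
  set v : ℝ → ℝ := fun y => ρ y ^ (s / 4) with hvdef
  set u : ℝ → ℝ := fun y => ρ y ^ (s / 2) with hudef
  have hv : ContDiff ℝ 2 v := hρ.rpow_const_of_ne (fun x => (hpos x).ne')
  have hvper : Function.Periodic v 1 := fun y => by
    show ρ (y + 1) ^ (s / 4) = ρ y ^ (s / 4)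
    rw [hperρ y]
  have huv : u = fun y => (v y) ^ 2 := by
    funext y
    show ρ y ^ (s / 2) = (ρ y ^ (s / 4)) ^ 2
    rw [← Real.rpow_natCast (ρ y ^ (s / 4)) 2, ← Real.rpow_mul (hpos y).le]
    norm_num
    rw [show s / 4 * 2 = s / 2 by ring]
  obtain ⟨hdv, hddvd, hcddv⟩ := contDiff_deriv_aux hv
  have hcv : Continuous v := hv.continuous
  have hcdv : Continuous (deriv v) := hddvd.continuous
  have hu1 : deriv u = fun x => 2 * (v x * deriv v x) := by
    funext x
    rw [huv]
    have h : HasDerivAt (fun y => (v y) ^ 2) (2 * (v x * deriv v x)) x := by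
      have h0 := ((hdv x).hasDerivAt).pow 2
      refine h0.congr_deriv ?_
      push_cast; ring
    exact h.deriv
  have hu2 : ∀ x, deriv (deriv u) x
      = 2 * (deriv v x ^ 2 + v x * deriv (deriv v) x) := by
    intro x
    rw [hu1]
    have h : HasDerivAt (fun y => 2 * (v y * deriv v y))
        (2 * (deriv v x ^ 2 + v x * deriv (deriv v) x)) x := by
      have h0 := HasDerivAt.const_mul (2:ℝ)
        (((hdv x).hasDerivAt).mul ((hddvd x).hasDerivAt))
      refine h0.congr_deriv ?_
      ring
    exact h.deriv
  have hcddu : Continuous (deriv (deriv u)) := by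
    rw [show deriv (deriv u)
        = fun x => 2 * (deriv v x ^ 2 + v x * deriv (deriv v) x) from funext hu2]
    exact continuous_const.mul ((hcdv.pow 2).add (hcv.mul hcddv))
  have hI1 : ∀ x : ℝ, |deriv (deriv u) x| ^ 2
      = 4 * ((deriv v x ^ 2 + v x * deriv (deriv v) x) ^ 2) := by
    intro x; rw [sq_abs, hu2 x]; ring
  have hI2 : ∀ x : ℝ, |deriv v x| ^ 4 = deriv v x ^ 4 := by
    intro x
    rw [show (4:ℕ) = 2 * 2 from rfl, pow_mul, sq_abs, ← pow_mul]
  set A := ∫ x in (0:ℝ)..1, |deriv (deriv u) x| ^ 2 with hAdef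
  set B := ∫ x in (0:ℝ)..1, |deriv v x| ^ 4 with hBdef
  set W := ∫ x in (0:ℝ)..1, (deriv v x ^ 2 + v x * deriv (deriv v) x) ^ 2 with hWdef
  have hW0 : 0 ≤ W :=
    intervalIntegral.integral_nonneg (by norm_num) fun x _ => sq_nonneg _
  have hAW : A = 4 * W := by
    rw [hAdef, hWdef]
    simp_rw [hI1]
    rw [intervalIntegral.integral_const_mul]
  have hB4 : B = ∫ x in (0:ℝ)..1, deriv v x ^ 4 := by
    rw [hBdef]; simp_rw [hI2]
  have hBW : B ≤ (9/4) * W := by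
    rw [hB4, hWdef]; exact bernis hv hvper
  have hA0 : 0 ≤ A := by rw [hAW]; linarith
  have hB0 : 0 ≤ B :=
    intervalIntegral.integral_nonneg (by norm_num) fun x _ => by positivity
  have hBA : B ≤ (9/16) * A := by rw [hAW]; linarith
  have hRHS : (∫ x in (0:ℝ)..1,
        (c1 * |deriv (deriv u) x| ^ 2 + c2 * |deriv v x| ^ 4))
      = c1 * A + c2 * B := by
    rw [intervalIntegral.integral_add (f := fun x => c1 * |deriv (deriv u) x| ^ 2)
        (g := fun x => c2 * |deriv v x| ^ 4)
        ((continuous_const.mul (hcddu.abs.pow 2)).intervalIntegrable 0 1)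
        ((continuous_const.mul (hcdv.abs.pow 4)).intervalIntegrable 0 1),
      intervalIntegral.integral_const_mul, intervalIntegral.integral_const_mul]
  rw [hRHS]
  have hκA : κ * A ≤ c1 * A + c2 * B := by
    rcases le_or_gt 0 c2 with h | h
    · have h3 := mul_le_mul_of_nonneg_right (min_le_left c1 (c1 + 9 / 16 * c2)) hA0
      have h4 := mul_nonneg h hB0
      rw [← hκdef] at h3
      linarith
    · have h3 := mul_le_mul_of_nonneg_right (min_le_right c1 (c1 + 9 / 16 * c2)) hA0
      rw [← hκdef] at h3
      have h4 : 0 ≤ (9 / 16 * A - B) * (-c2) := by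
        apply mul_nonneg (by linarith) (by linarith)
      nlinarith
  calc A + B ≤ 2 * A := by linarith
    _ = (2 / κ) * (κ * A) := by field_simp
    _ ≤ (2 / κ) * (c1 * A + c2 * B) :=
        mul_le_mul_of_nonneg_left hκA (by positivity)
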